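/- For every n ≥ 2, the restriction of the angle-doubling map d to the open hemisphere {x ∈ S^n : x_{n+1} = 0 and x_n > 0} is a bijection onto S^{n−1} \ {(0, …, 0, −1)}. -/

import Mathlib

/-- The angle-doubling map `d : ℝ^{n+1} → ℝ^n`,
`d(x_1, …, x_{n+1}) = (2x_n x_1, …, 2x_n x_{n−1}, 2x_n² − 1)`
(here coordinates `x_1, …, x_{n+1}` correspond to indices `0, …, n`). -/
noncomputable def doubling (n : ℕ) (x : EuclideanSpace ℝ (Fin (n + 1))) :
    EuclideanSpace ℝ (Fin n) := WithLp.toLp 2 (fun j =>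
  if (j : ℕ) < n - 1 then 2 * x ⟨n - 1, by omega⟩ * x (Fin.castSucc j)
  else 2 * (x ⟨n - 1, by omega⟩) ^ 2 - 1)

/-- The point `(0, …, 0, −1) ∈ S^{n−1} ⊂ ℝ^n`. -/
def southPole (n : ℕ) : EuclideanSpace ℝ (Fin n) := WithLp.toLp 2 (fun j =>
  if (j : ℕ) = n - 1 then -1 else 0)

private lemma sphere_iff_sum {k : ℕ} {x : EuclideanSpace ℝ (Fin k)} :
    x ∈ Metric.sphere (0 : EuclideanSpace ℝ (Fin k)) 1 ↔ ∑ i, x i ^ 2 = 1 := by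
  rw [mem_sphere_zero_iff_norm, EuclideanSpace.norm_eq, Real.sqrt_eq_one]
  simp [Real.norm_eq_abs, sq_abs]

private lemma sum3 {m : ℕ} (f : Fin (m + 3) → ℝ) :
    ∑ i, f i = (∑ i : Fin (m + 1), f i.castSucc.castSucc)
      + f ⟨m + 1, by omega⟩ + f ⟨m + 2, by omega⟩ := by
  rw [Fin.sum_univ_castSucc, Fin.sum_univ_castSucc]
  rfl

private lemma sum2 {m : ℕ} (f : Fin (m + 2) → ℝ) :
    ∑ i, f i = (∑ i : Fin (m + 1), f i.castSucc) + f (Fin.last (m + 1)) :=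
  Fin.sum_univ_castSucc f

private lemma doubling_castSucc (m : ℕ) (x : EuclideanSpace ℝ (Fin (m + 3)))
    (i : Fin (m + 1)) :
    doubling (m + 2) x i.castSucc
      = 2 * x ⟨m + 1, by omega⟩ * x (i.castSucc.castSucc) := by
  have h : ((i.castSucc : Fin (m + 2)) : ℕ) < m + 2 - 1 := by
    simp [i.isLt]
  simp only [doubling, WithLp.ofLp_toLp, if_pos h]
  rfl

private lemma doubling_last (m : ℕ) (x : EuclideanSpace ℝ (Fin (m + 3))) :
    doubling (m + 2) x (Fin.last (m + 1)) = 2 * x ⟨m + 1, by omega⟩ ^ 2 - 1 := by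
  have h : ¬ ((Fin.last (m + 1) : Fin (m + 2)) : ℕ) < m + 2 - 1 := by simp
  simp only [doubling, WithLp.ofLp_toLp, if_neg h]
  rfl

/-- partial inverse -/
noncomputable def dInv (m : ℕ) (y : EuclideanSpace ℝ (Fin (m + 2))) (a : ℝ) :
    EuclideanSpace ℝ (Fin (m + 3)) := WithLp.toLp 2 (fun j =>
  if h : (j : ℕ) < m + 1 then y ⟨(j : ℕ), by omega⟩ / (2 * a)
  else if (j : ℕ) = m + 1 then a else 0)

private lemma dInv_lt {m : ℕ} (y : EuclideanSpace ℝ (Fin (m + 2))) (a : ℝ)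
    (i : Fin (m + 1)) :
    dInv m y a (i.castSucc.castSucc) = y i.castSucc / (2 * a) := by
  have h : ((i.castSucc.castSucc : Fin (m + 3)) : ℕ) < m + 1 := by
    simp [i.isLt]
  simp only [dInv, WithLp.ofLp_toLp, dif_pos h]
  congr 1

private lemma dInv_mid {m : ℕ} (y : EuclideanSpace ℝ (Fin (m + 2))) (a : ℝ) :
    dInv m y a ⟨m + 1, by omega⟩ = a := by
  simp [dInv]

private lemma dInv_last {m : ℕ} (y : EuclideanSpace ℝ (Fin (m + 2))) (a : ℝ) :
    dInv m y a ⟨m + 2, by omega⟩ = 0 := by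
  simp [dInv]

theorem doubling_bijOn_openHemisphere (n : ℕ) (hn : 2 ≤ n) :
    Set.BijOn (doubling n)
      {x | x ∈ Metric.sphere (0 : EuclideanSpace ℝ (Fin (n + 1))) 1 ∧
        x ⟨n, by omega⟩ = 0 ∧ 0 < x ⟨n - 1, by omega⟩}
      (Metric.sphere (0 : EuclideanSpace ℝ (Fin n)) 1 \ {southPole n}) := by
  obtain ⟨m, rfl⟩ : ∃ m, n = m + 2 := ⟨n - 2, by omega⟩
  refine ⟨?_, ?_, ?_⟩
  · -- MapsTo
    rintro x ⟨hx1, hx2, hx3⟩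
    have hx3' : 0 < x ⟨m + 1, by omega⟩ := hx3
    rw [sphere_iff_sum, sum3] at hx1
    rw [hx2] at hx1
    constructor
    · rw [sphere_iff_sum, sum2]
      have h1 : ∑ i : Fin (m + 1), doubling (m + 2) x i.castSucc ^ 2
          = 4 * x ⟨m + 1, by omega⟩ ^ 2
            * ∑ i : Fin (m + 1), x i.castSucc.castSucc ^ 2 := by
        rw [Finset.mul_sum]
        refine Finset.sum_congr rfl fun i _ => ?_
        rw [doubling_castSucc]
        ring
      rw [h1, doubling_last]
      nlinarith [hx1]
    · intro hmem
      have h := congrFun (congrArg WithLp.ofLp (Set.eq_of_mem_singleton hmem)) (Fin.last (m + 1))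
      rw [doubling_last] at h
      have hsp : southPole (m + 2) (Fin.last (m + 1)) = -1 := by
        simp [southPole, Fin.last]
      rw [hsp] at h
      nlinarith [hx3']
  · -- InjOn
    rintro x ⟨hx1, hx2, hx3⟩ y ⟨hy1, hy2, hy3⟩ h
    have hx3' : 0 < x ⟨m + 1, by omega⟩ := hx3
    have hy3' : 0 < y ⟨m + 1, by omega⟩ := hy3
    have hlast := congrFun (congrArg WithLp.ofLp h) (Fin.last (m + 1))
    rw [doubling_last, doubling_last] at hlast
    have hab : x ⟨m + 1, by omega⟩ = y ⟨m + 1, by omega⟩ := by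
      nlinarith [hx3', hy3', hlast]
    ext j
    by_cases hj : (j : ℕ) < m + 1
    · have hc := congrFun (congrArg WithLp.ofLp h) ((⟨(j : ℕ), hj⟩ : Fin (m + 1)).castSucc)
      rw [doubling_castSucc, doubling_castSucc, hab] at hc
      have h2a : (2 * y (⟨m + 1, by omega⟩ : Fin (m + 3))) ≠ 0 := by positivity
      have hxy := mul_left_cancel₀ h2a hc
      exact hxy
    · by_cases hj2 : (j : ℕ) = m + 1
      · have hje : j = (⟨m + 1, by omega⟩ : Fin (m + 3)) := Fin.ext hj2
        rw [hje]; exact hab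
      · have hje : j = (⟨m + 2, by omega⟩ : Fin (m + 3)) :=
          Fin.ext (show (j : ℕ) = m + 2 by omega)
        rw [hje, hx2, hy2]
  · -- SurjOn
    rintro y ⟨hy1, hy2⟩
    rw [sphere_iff_sum, sum2] at hy1
    have hSnn : (0:ℝ) ≤ ∑ i : Fin (m + 1), y i.castSucc ^ 2 :=
      Finset.sum_nonneg fun i _ => sq_nonneg _
    have hc1 : -1 ≤ y (Fin.last (m + 1)) := by nlinarith
    have hcne : y (Fin.last (m + 1)) ≠ -1 := by
      intro hcc
      apply hy2
      have hS0 : ∑ i : Fin (m + 1), y i.castSucc ^ 2 = 0 := by nlinarith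
      have hz : ∀ i : Fin (m + 1), y i.castSucc = 0 := by
        intro i
        have := (Finset.sum_eq_zero_iff_of_nonneg
          (fun i _ => sq_nonneg (y i.castSucc))).mp hS0 i (Finset.mem_univ i)
        exact pow_eq_zero_iff (by norm_num) |>.mp this
      show y = southPole (m + 2)
      ext j
      by_cases hj : (j : ℕ) < m + 1
      · have hji : j = ((⟨(j : ℕ), hj⟩ : Fin (m + 1)).castSucc) := Fin.ext rfl
        rw [hji, hz]
        have hne : ¬ (((⟨(j : ℕ), hj⟩ : Fin (m + 1)).castSucc : ℕ) = m + 2 - 1) := by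
          simp; omega
        simp only [southPole]
        rw [if_neg (show ¬ (((⟨(j : ℕ), hj⟩ : Fin (m + 1)).castSucc : ℕ) = m + 2 - 1) from hne)]
      · have hje : j = Fin.last (m + 1) := Fin.ext (show (j : ℕ) = m + 1 by omega)
        rw [hje, hcc]
        simp [southPole, Fin.last]
    have hcgt : -1 < y (Fin.last (m + 1)) := lt_of_le_of_ne hc1 (Ne.symm hcne)
    set a : ℝ := Real.sqrt ((y (Fin.last (m + 1)) + 1) / 2) with haa
    have ha2 : a ^ 2 = (y (Fin.last (m + 1)) + 1) / 2 := Real.sq_sqrt (by linarith)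
    have hapos : 0 < a := Real.sqrt_pos.mpr (by linarith)
    have h2a : (2 * a) ≠ 0 := by positivity
    refine ⟨dInv m y a, ⟨?_, ?_, ?_⟩, ?_⟩
    · rw [sphere_iff_sum, sum3]
      have h1 : ∑ i : Fin (m + 1), dInv m y a i.castSucc.castSucc ^ 2
          = (∑ i : Fin (m + 1), y i.castSucc ^ 2) / (4 * a ^ 2) := by
        rw [Finset.sum_div]
        refine Finset.sum_congr rfl fun i _ => ?_
        rw [dInv_lt, div_pow, show (2*a)^2 = 4*a^2 by ring]
      rw [h1, dInv_mid, dInv_last]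
      have hSval : ∑ i : Fin (m + 1), y i.castSucc ^ 2
          = 1 - y (Fin.last (m + 1)) ^ 2 := by linarith
      rw [hSval, ha2]
      have hcp : y (Fin.last (m + 1)) + 1 ≠ 0 := by linarith
      field_simp
      ring
    · exact dInv_last y a
    · have := dInv_mid y a
      show (0:ℝ) < dInv m y a ⟨m + 2 - 1, by omega⟩
      rw [show dInv m y a ⟨m + 2 - 1, by omega⟩ = a from dInv_mid y a]
      exact hapos
    · ext j
      by_cases hj : (j : ℕ) < m + 1
      · have hji : j = ((⟨(j : ℕ), hj⟩ : Fin (m + 1)).castSucc) := Fin.ext rfl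
        rw [hji, doubling_castSucc, dInv_mid, dInv_lt]
        field_simp
      · have hje : j = Fin.last (m + 1) := Fin.ext (show (j : ℕ) = m + 1 by omega)
        rw [hje, doubling_last, dInv_mid, ha2]
        ring
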